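/- Let B : [0,1] → ℝ be continuous with B(0) = 0. For every pair of real numbers a, b there exists a unique B-solution u with u(0) = b and u'(0) = a. -/

import Mathlib

open MeasureTheory intervalIntegral

/-- `u` is a pathwise (`B`-)solution of the homogeneous equation `-u'' + B'·u = 0`:
`u` is continuously differentiable on `[0,1]` with derivative `u'`, and
`u'(x) = u'(0) + u(x)·B(x) - ∫_0^x u'(y)·B(y) dy` for all `x ∈ [0,1]`. -/
def IsBSolution (B u u' : ℝ → ℝ) : Prop :=
  (∀ x ∈ Set.Icc (0:ℝ) 1, HasDerivWithinAt u (u' x) (Set.Icc 0 1) x) ∧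
  ContinuousOn u' (Set.Icc 0 1) ∧
  ∀ x ∈ Set.Icc (0:ℝ) 1, u' x = u' 0 + u x * B x - ∫ y in (0:ℝ)..x, u' y * B y

open Set

noncomputable section BSolAux

/-- Extension of a continuous map on `[0,1]` to all of `ℝ` via projection. -/
def IccExt (f : C(Set.Icc (0:ℝ) 1, ℝ)) : ℝ → ℝ := fun t => f (Set.projIcc 0 1 zero_le_one t)

lemma continuous_iccExt (f : C(Set.Icc (0:ℝ) 1, ℝ)) : Continuous (IccExt f) :=
  f.continuous.comp continuous_projIcc

lemma iccExt_eq (f : C(Set.Icc (0:ℝ) 1, ℝ)) {t : ℝ} (ht : t ∈ Icc (0:ℝ) 1) :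
    IccExt f t = f ⟨t, ht⟩ := congrArg f (Set.projIcc_of_mem _ ht)

lemma iccExt_intervalIntegrable (f : C(Set.Icc (0:ℝ) 1, ℝ)) (g : ℝ → ℝ) (hg : Continuous g)
    (c d : ℝ) : IntervalIntegrable (fun y => IccExt f y * g y) volume c d :=
  ((continuous_iccExt f).mul hg).intervalIntegrable c d

/-- The Volterra-type operator whose fixed point solves the equation. -/
def Tmap (Bc : ℝ → ℝ) (hBc : Continuous Bc) (a b : ℝ)
    (f : C(Set.Icc (0:ℝ) 1, ℝ)) : C(Set.Icc (0:ℝ) 1, ℝ) := by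
  refine ⟨fun x => a + (b + ∫ y in (0:ℝ)..(x:ℝ), IccExt f y) * Bc x
      - ∫ y in (0:ℝ)..(x:ℝ), IccExt f y * Bc y, ?_⟩
  have hF : Continuous fun x : ℝ => ∫ y in (0:ℝ)..x, IccExt f y :=
    intervalIntegral.continuous_primitive
      (fun c d => (continuous_iccExt f).intervalIntegrable c d) 0
  have hG : Continuous fun x : ℝ => ∫ y in (0:ℝ)..x, IccExt f y * Bc y :=
    intervalIntegral.continuous_primitive
      (fun c d => ((continuous_iccExt f).mul hBc).intervalIntegrable c d) 0
  exact ((continuous_const.add (((continuous_const.add hF).mul hBc))).sub hG).comp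
    continuous_subtype_val

lemma Tmap_apply (Bc : ℝ → ℝ) (hBc : Continuous Bc) (a b : ℝ)
    (f : C(Set.Icc (0:ℝ) 1, ℝ)) {x : ℝ} (hx : x ∈ Icc (0:ℝ) 1) :
    IccExt (Tmap Bc hBc a b f) x
      = a + (b + ∫ y in (0:ℝ)..x, IccExt f y) * Bc x
        - ∫ y in (0:ℝ)..x, IccExt f y * Bc y := by
  rw [iccExt_eq _ hx]; rfl

/-- Fundamental theorem of calculus: from the `HasDerivWithinAt` hypothesis on `[0,1]`. -/
lemma sol_integral (u u' : ℝ → ℝ)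
    (hd : ∀ x ∈ Icc (0:ℝ) 1, HasDerivWithinAt u (u' x) (Icc 0 1) x)
    (hc : ContinuousOn u' (Icc (0:ℝ) 1)) {x : ℝ} (hx : x ∈ Icc (0:ℝ) 1) :
    u x = u 0 + ∫ y in (0:ℝ)..x, u' y := by
  have h0x : Icc (0:ℝ) x ⊆ Icc 0 1 := Icc_subset_Icc le_rfl hx.2
  have hcu : ContinuousOn u (Icc (0:ℝ) 1) := fun t ht => (hd t ht).continuousWithinAt
  have key : ∫ y in (0:ℝ)..x, u' y = u x - u 0 := by
    refine intervalIntegral.integral_eq_sub_of_hasDeriv_right_of_le hx.1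
      (hcu.mono h0x) (fun t ht => ?_) ((hc.mono h0x).intervalIntegrable_of_Icc hx.1)
    have ht1 : t ∈ Icc (0:ℝ) 1 := ⟨ht.1.le, ht.2.le.trans hx.2⟩
    exact (hd t ht1).mono_of_mem_nhdsWithin
      (Icc_mem_nhdsGT_of_mem ⟨ht.1.le, lt_of_lt_of_le ht.2 hx.2⟩)
  linarith [key]

/-- The key iterated-contraction estimate. -/
lemma iter_est (Bc : ℝ → ℝ) (hBc : Continuous Bc) (M : ℝ) (hM : ∀ t, |Bc t| ≤ M)
    (a b : ℝ) (f g : C(Set.Icc (0:ℝ) 1, ℝ)) :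
    ∀ n : ℕ, ∀ x ∈ Icc (0:ℝ) 1,
      |IccExt ((Tmap Bc hBc a b)^[n] f) x - IccExt ((Tmap Bc hBc a b)^[n] g) x|
        ≤ (2*M)^n * x^n / n.factorial * dist f g := by
  have hM0 : 0 ≤ M := (abs_nonneg _).trans (hM 0)
  intro n
  induction n with
  | zero =>
    intro x hx
    simp only [Function.iterate_zero_apply, pow_zero, Nat.factorial_zero, Nat.cast_one]
    rw [iccExt_eq f hx, iccExt_eq g hx]
    simpa [Real.dist_eq] using ContinuousMap.dist_apply_le_dist (f := f) (g := g) ⟨x, hx⟩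
  | succ n ih =>
    intro x hx
    set F := Tmap Bc hBc a b with hF
    set h := F^[n] f with hh
    set h' := F^[n] g with hh'
    have hx0 : (0:ℝ) ≤ x := hx.1
    have hsub : ∀ y ∈ Icc (0:ℝ) x, y ∈ Icc (0:ℝ) 1 :=
      fun y hy => ⟨hy.1, hy.2.trans hx.2⟩
    rw [Function.iterate_succ_apply', Function.iterate_succ_apply',
      Tmap_apply Bc hBc a b _ hx, Tmap_apply Bc hBc a b _ hx]
    have hIh : IntervalIntegrable (fun y => IccExt h y) volume 0 x :=
      (continuous_iccExt h).intervalIntegrable 0 x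
    have hIh' : IntervalIntegrable (fun y => IccExt h' y) volume 0 x :=
      (continuous_iccExt h').intervalIntegrable 0 x
    have hIhB : IntervalIntegrable (fun y => IccExt h y * Bc y) volume 0 x :=
      ((continuous_iccExt h).mul hBc).intervalIntegrable 0 x
    have hIh'B : IntervalIntegrable (fun y => IccExt h' y * Bc y) volume 0 x :=
      ((continuous_iccExt h').mul hBc).intervalIntegrable 0 x
    have hD : Continuous fun y => |IccExt h y - IccExt h' y| :=
      ((continuous_iccExt h).sub (continuous_iccExt h')).abs
    -- the bound on ∫ |D|
    have hbound : (∫ y in (0:ℝ)..x, |IccExt h y - IccExt h' y|)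
        ≤ (2*M)^n / n.factorial * dist f g * (x^(n+1) / (n+1)) := by
      have hmono : (∫ y in (0:ℝ)..x, |IccExt h y - IccExt h' y|)
          ≤ ∫ y in (0:ℝ)..x, (2*M)^n * y^n / n.factorial * dist f g := by
        refine intervalIntegral.integral_mono_on hx0 (hD.intervalIntegrable 0 x)
          (Continuous.intervalIntegrable (by continuity) 0 x) ?_
        intro y hy
        exact ih y (hsub y hy)
      have hcalc : (∫ y in (0:ℝ)..x, (2*M)^n * y^n / n.factorial * dist f g)
          = (2*M)^n / n.factorial * dist f g * (x^(n+1) / (n+1)) := by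
        have : (fun y : ℝ => (2*M)^n * y^n / n.factorial * dist f g)
            = fun y : ℝ => ((2*M)^n / n.factorial * dist f g) * y^n := by
          funext y; ring
        rw [this, intervalIntegral.integral_const_mul, integral_pow]
        push_cast
        ring
      linarith [hmono, hcalc.symm.le]
    have habs1 : |∫ y in (0:ℝ)..x, IccExt h y - IccExt h' y|
        ≤ ∫ y in (0:ℝ)..x, |IccExt h y - IccExt h' y| :=
      intervalIntegral.abs_integral_le_integral_abs hx0
    have habs2 : |∫ y in (0:ℝ)..x, (IccExt h y - IccExt h' y) * Bc y|
        ≤ M * ∫ y in (0:ℝ)..x, |IccExt h y - IccExt h' y| := by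
      calc |∫ y in (0:ℝ)..x, (IccExt h y - IccExt h' y) * Bc y|
          ≤ ∫ y in (0:ℝ)..x, |(IccExt h y - IccExt h' y) * Bc y| :=
            intervalIntegral.abs_integral_le_integral_abs hx0
        _ ≤ ∫ y in (0:ℝ)..x, M * |IccExt h y - IccExt h' y| := by
            refine intervalIntegral.integral_mono_on hx0
              ((((continuous_iccExt h).sub (continuous_iccExt h')).mul hBc).abs.intervalIntegrable 0 x)
              ((continuous_const.mul hD).intervalIntegrable 0 x) ?_
            intro y _
            rw [abs_mul, mul_comm]
            exact mul_le_mul_of_nonneg_right (hM y) (abs_nonneg _)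
        _ = M * ∫ y in (0:ℝ)..x, |IccExt h y - IccExt h' y| := by
            rw [intervalIntegral.integral_const_mul]
      -- done
    have hInt0 : 0 ≤ ∫ y in (0:ℝ)..x, |IccExt h y - IccExt h' y| :=
      intervalIntegral.integral_nonneg hx0 (fun y _ => abs_nonneg _)
    have step : |(a + (b + ∫ y in (0:ℝ)..x, IccExt h y) * Bc x
          - ∫ y in (0:ℝ)..x, IccExt h y * Bc y)
        - (a + (b + ∫ y in (0:ℝ)..x, IccExt h' y) * Bc x
          - ∫ y in (0:ℝ)..x, IccExt h' y * Bc y)|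
        ≤ 2*M * ∫ y in (0:ℝ)..x, |IccExt h y - IccExt h' y| := by
      have e1 : (∫ y in (0:ℝ)..x, IccExt h y) - ∫ y in (0:ℝ)..x, IccExt h' y
          = ∫ y in (0:ℝ)..x, (IccExt h y - IccExt h' y) :=
        (intervalIntegral.integral_sub hIh hIh').symm
      have e2 : (∫ y in (0:ℝ)..x, IccExt h y * Bc y) - ∫ y in (0:ℝ)..x, IccExt h' y * Bc y
          = ∫ y in (0:ℝ)..x, (IccExt h y - IccExt h' y) * Bc y := by
        rw [← intervalIntegral.integral_sub hIhB hIh'B]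
        congr 1; funext y; ring
      have erw : (a + (b + ∫ y in (0:ℝ)..x, IccExt h y) * Bc x
            - ∫ y in (0:ℝ)..x, IccExt h y * Bc y)
          - (a + (b + ∫ y in (0:ℝ)..x, IccExt h' y) * Bc x
            - ∫ y in (0:ℝ)..x, IccExt h' y * Bc y)
          = (∫ y in (0:ℝ)..x, (IccExt h y - IccExt h' y)) * Bc x
            - ∫ y in (0:ℝ)..x, (IccExt h y - IccExt h' y) * Bc y := by
        rw [← e1, ← e2]; ring
      rw [erw]
      calc |(∫ y in (0:ℝ)..x, (IccExt h y - IccExt h' y)) * Bc x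
            - ∫ y in (0:ℝ)..x, (IccExt h y - IccExt h' y) * Bc y|
          ≤ |(∫ y in (0:ℝ)..x, (IccExt h y - IccExt h' y)) * Bc x|
            + |∫ y in (0:ℝ)..x, (IccExt h y - IccExt h' y) * Bc y| := abs_sub _ _
        _ ≤ (∫ y in (0:ℝ)..x, |IccExt h y - IccExt h' y|) * M
            + M * ∫ y in (0:ℝ)..x, |IccExt h y - IccExt h' y| := by
            refine add_le_add ?_ habs2
            rw [abs_mul]
            exact mul_le_mul habs1 (hM x) (abs_nonneg _) hInt0
        _ = 2*M * ∫ y in (0:ℝ)..x, |IccExt h y - IccExt h' y| := by ring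
    refine step.trans ?_
    have hfact : ((n+1 : ℕ).factorial : ℝ) = (n+1) * n.factorial := by
      rw [Nat.factorial_succ]; push_cast; ring
    have hfin : 2*M * ((2*M)^n / n.factorial * dist f g * (x^(n+1) / (n+1)))
        = (2*M)^(n+1) * x^(n+1) / ((n+1 : ℕ).factorial) * dist f g := by
      rw [hfact]
      have hnf : (n.factorial : ℝ) ≠ 0 := Nat.cast_ne_zero.2 n.factorial_ne_zero
      have hn1 : ((n:ℝ)+1) ≠ 0 := by positivity
      field_simp
      ring
    calc 2*M * ∫ y in (0:ℝ)..x, |IccExt h y - IccExt h' y|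
        ≤ 2*M * ((2*M)^n / n.factorial * dist f g * (x^(n+1) / (n+1))) := by
          exact mul_le_mul_of_nonneg_left hbound (by positivity)
      _ = (2*M)^(n+1) * x^(n+1) / ((n+1 : ℕ).factorial) * dist f g := hfin

end BSolAux

/-- Existence and uniqueness of the B-solution with prescribed initial data
u(0) = b, u'(0) = a. -/
theorem bsolution_exists_unique (B : ℝ → ℝ)
    (hB : ContinuousOn B (Set.Icc 0 1)) (hB0 : B 0 = 0) (a b : ℝ) :
    (∃ u u' : ℝ → ℝ, IsBSolution B u u' ∧ u 0 = b ∧ u' 0 = a) ∧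
    (∀ u u' w w' : ℝ → ℝ, IsBSolution B u u' → IsBSolution B w w' →
      u 0 = b → u' 0 = a → w 0 = b → w' 0 = a →
      ∀ x ∈ Set.Icc (0:ℝ) 1, u x = w x) := by
  classical
  -- continuous extension of B
  set Bc : ℝ → ℝ := fun t => B ((Set.projIcc 0 1 zero_le_one t : Set.Icc (0:ℝ) 1) : ℝ) with hBcdef
  have hBc : Continuous Bc := by
    have : Continuous ((Set.Icc (0:ℝ) 1).restrict B) := hB.restrict
    exact this.comp continuous_projIcc
  have hBcB : ∀ t ∈ Set.Icc (0:ℝ) 1, Bc t = B t := by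
    intro t ht
    show B ((Set.projIcc 0 1 zero_le_one t : Set.Icc (0:ℝ) 1) : ℝ) = B t
    rw [Set.projIcc_of_mem _ ht]
  -- bound on Bc
  obtain ⟨M, hMpos, hM⟩ : ∃ M : ℝ, 0 < M ∧ ∀ t, |Bc t| ≤ M := by
    obtain ⟨M0, hM0⟩ := (isCompact_Icc (a := (0:ℝ)) (b := 1)).exists_bound_of_continuousOn hB
    refine ⟨max M0 1, lt_of_lt_of_le one_pos (le_max_right _ _), fun t => ?_⟩
    have := hM0 _ (Set.projIcc 0 1 zero_le_one t).2
    calc |Bc t| ≤ M0 := by simpa [hBcdef, Real.norm_eq_abs] using this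
      _ ≤ max M0 1 := le_max_left _ _
  set F := Tmap Bc hBc a b with hFdef
  -- find n making F^[n] a contraction
  obtain ⟨n, hn⟩ : ∃ n : ℕ, (2*M)^n / n.factorial < 1 := by
    have := FloorSemiring.tendsto_pow_div_factorial_atTop (K := ℝ) (2*M)
    obtain ⟨n, hn⟩ := (this.eventually_lt_const one_pos).exists
    exact ⟨n, hn⟩
  have hcnonneg : 0 ≤ (2*M)^n / n.factorial := by positivity
  have hLip : ∀ f g : C(Set.Icc (0:ℝ) 1, ℝ),
      dist (F^[n] f) (F^[n] g) ≤ ((2*M)^n / n.factorial) * dist f g := by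
    intro f g
    rw [ContinuousMap.dist_le (by positivity)]
    intro p
    have hp : (p : ℝ) ∈ Set.Icc (0:ℝ) 1 := p.2
    have := iter_est Bc hBc M hM a b f g n (p : ℝ) hp
    rw [iccExt_eq _ hp, iccExt_eq _ hp] at this
    have hx1 : (p:ℝ)^n ≤ 1 := pow_le_one₀ hp.1 hp.2
    have hkey : (2*M)^n * (p:ℝ)^n / n.factorial ≤ (2*M)^n / n.factorial := by
      have hnf : (0:ℝ) < n.factorial := by positivity
      have h0 : (2*M)^n * (p:ℝ)^n ≤ (2*M)^n := by
        have := mul_le_mul_of_nonneg_left hx1 (show (0:ℝ) ≤ (2*M)^n by positivity)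
        simpa using this
      exact (div_le_div_iff_of_pos_right hnf).2 h0
    have hfinal : |(F^[n] f) p - (F^[n] g) p| ≤ (2*M)^n / n.factorial * dist f g := by
      have h2 : |(F^[n] f) p - (F^[n] g) p| ≤ (2*M)^n * (p:ℝ)^n / n.factorial * dist f g := by
        simpa using this
      exact h2.trans (mul_le_mul_of_nonneg_right hkey dist_nonneg)
    simpa [Real.dist_eq] using hfinal
  -- the contraction
  have hcontr : ContractingWith (Real.toNNReal ((2*M)^n / n.factorial)) (F^[n]) := by
    constructor
    · rw [← Real.toNNReal_one]
      exact (Real.toNNReal_lt_toNNReal_iff one_pos).2 hn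
    · apply LipschitzWith.of_dist_le_mul
      intro f g
      calc dist (F^[n] f) (F^[n] g) ≤ ((2*M)^n / n.factorial) * dist f g := hLip f g
        _ = (Real.toNNReal ((2*M)^n / n.factorial) : ℝ) * dist f g := by
            rw [Real.coe_toNNReal _ hcnonneg]
  set v : C(Set.Icc (0:ℝ) 1, ℝ) := ContractingWith.fixedPoint (F^[n]) hcontr with hvdef
  have hvfix : Function.IsFixedPt F v := hcontr.isFixedPt_fixedPoint_iterate
  have hIccsub : ∀ {x : ℝ}, x ∈ Set.Icc (0:ℝ) 1 → Set.uIcc (0:ℝ) x ⊆ Set.Icc (0:ℝ) 1 := by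
    intro x hx
    rw [Set.uIcc_of_le hx.1]
    exact Set.Icc_subset_Icc le_rfl hx.2
  -- fixed-point equation in pointwise form, for any fixed point of F
  have hfixeq : ∀ (f : C(Set.Icc (0:ℝ) 1, ℝ)), Function.IsFixedPt F f →
      ∀ x (hx : x ∈ Set.Icc (0:ℝ) 1),
        f ⟨x, hx⟩ = a + (b + ∫ y in (0:ℝ)..x, IccExt f y) * Bc x
          - ∫ y in (0:ℝ)..x, IccExt f y * Bc y := by
    intro f hf x hx
    have := Tmap_apply Bc hBc a b f hx
    rw [show Tmap Bc hBc a b f = f from hf] at this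
    rw [← this, iccExt_eq f hx]
  -- existence
  constructor
  · set u' : ℝ → ℝ := IccExt v with hu'def
    set u : ℝ → ℝ := fun x => b + ∫ y in (0:ℝ)..x, u' y with hudef
    have hu'cont : Continuous u' := continuous_iccExt v
    have hu'x : ∀ x (hx : x ∈ Set.Icc (0:ℝ) 1),
        u' x = a + (b + ∫ y in (0:ℝ)..x, u' y) * Bc x - ∫ y in (0:ℝ)..x, u' y * Bc y := by
      intro x hx
      rw [hu'def, iccExt_eq v hx]
      exact hfixeq v hvfix x hx
    have h01 : (0:ℝ) ∈ Set.Icc (0:ℝ) 1 := ⟨le_rfl, zero_le_one⟩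
    have hBc0 : Bc 0 = 0 := by rw [hBcB 0 h01, hB0]
    have hu'0 : u' 0 = a := by
      rw [hu'x 0 h01]
      simp [hBc0]
    have hu0 : u 0 = b := by simp [hudef]
    refine ⟨u, u', ⟨?_, hu'cont.continuousOn, ?_⟩, hu0, hu'0⟩
    · intro x hx
      have hd : HasDerivAt (fun t => ∫ y in (0:ℝ)..t, u' y) (u' x) x :=
        intervalIntegral.integral_hasDerivAt_right (hu'cont.intervalIntegrable 0 x)
          (hu'cont.stronglyMeasurableAtFilter _ _) hu'cont.continuousAt
      exact ((hd.const_add b).hasDerivWithinAt)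
    · intro x hx
      have hcongr : (∫ y in (0:ℝ)..x, u' y * Bc y) = ∫ y in (0:ℝ)..x, u' y * B y := by
        refine intervalIntegral.integral_congr fun y hy => ?_
        rw [hBcB y (hIccsub hx hy)]
      rw [hu'x x hx, hu'0, hBcB x hx, hcongr]
  -- uniqueness
  · intro u u' w w' hu hw hub hua hwb hwa x hx
    have mkfix : ∀ (z z' : ℝ → ℝ), IsBSolution B z z' → z 0 = b → z' 0 = a →
        ∃ f : C(Set.Icc (0:ℝ) 1, ℝ), Function.IsFixedPt F f ∧
          ∀ y (hy : y ∈ Set.Icc (0:ℝ) 1), f ⟨y, hy⟩ = z' y := by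
      intro z z' hz hzb hza
      obtain ⟨hzd, hzc, hzeq⟩ := hz
      refine ⟨⟨(Set.Icc (0:ℝ) 1).restrict z', hzc.restrict⟩, ?_, fun y hy => rfl⟩
      set f : C(Set.Icc (0:ℝ) 1, ℝ) := ⟨(Set.Icc (0:ℝ) 1).restrict z', hzc.restrict⟩ with hfdef
      have hext : ∀ {y : ℝ}, y ∈ Set.Icc (0:ℝ) 1 → IccExt f y = z' y := by
        intro y hy
        rw [iccExt_eq f hy]
        rfl
      apply ContinuousMap.ext
      rintro ⟨p, hp⟩
      show a + (b + ∫ y in (0:ℝ)..p, IccExt f y) * Bc p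
          - ∫ y in (0:ℝ)..p, IccExt f y * Bc y = z' p
      have h1 : (∫ y in (0:ℝ)..p, IccExt f y) = ∫ y in (0:ℝ)..p, z' y :=
        intervalIntegral.integral_congr fun y hy => hext (hIccsub hp hy)
      have h2 : (∫ y in (0:ℝ)..p, IccExt f y * Bc y) = ∫ y in (0:ℝ)..p, z' y * B y := by
        refine intervalIntegral.integral_congr fun y hy => ?_
        rw [hext (hIccsub hp hy), hBcB y (hIccsub hp hy)]
      have h3 : z p = b + ∫ y in (0:ℝ)..p, z' y := by
        rw [← hzb]
        exact sol_integral z z' hzd hzc hp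
      have h4 := hzeq p hp
      rw [h1, h2, hBcB p hp, h4, hza, h3]
    obtain ⟨fu, hfu, hfu'⟩ := mkfix u u' hu hub hua
    obtain ⟨fw, hfw, hfw'⟩ := mkfix w w' hw hwb hwa
    have hfeq : fu = fw := hcontr.fixedPoint_unique' (hfu.iterate n) (hfw.iterate n)
    have hderiv_eq : ∀ y ∈ Set.Icc (0:ℝ) 1, u' y = w' y := by
      intro y hy
      rw [← hfu' y hy, ← hfw' y hy, hfeq]
    have h5 : u x = b + ∫ y in (0:ℝ)..x, u' y := by
      rw [← hub]; exact sol_integral u u' hu.1 hu.2.1 hx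
    have h6 : w x = b + ∫ y in (0:ℝ)..x, w' y := by
      rw [← hwb]; exact sol_integral w w' hw.1 hw.2.1 hx
    rw [h5, h6]
    congr 1
    exact intervalIntegral.integral_congr fun y hy => hderiv_eq y (hIccsub hx hy)
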